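/- Let κ, k, m, ε, p, q ∈ ℝ with p ∉ {−1, 0, 1} and q ≠ 0. Suppose u : ℝ → ℝ → ℝ is C² on ℝ × (0,∞), u_r(t,r) > 0 for all t ∈ ℝ and r > 0, and u satisfies u_t(t,r) = −κ·(p·u_r(t,r)^(p−1)·u_rr(t,r) + (m/r)·u_r(t,r)^p) + k·exp(q·u(t,r)) for all t ∈ ℝ and r > 0, where all powers are real powers (Real.rpow). Define v(t,r) = u(exp(−(p+1)·q·ε)·t, exp(−q·ε)·r) − (p+1)·ε. Then v_r(t,r) > 0 and v satisfies the same equation, v_t = −κ·(p·v_r^(p−1)·v_rr + (m/r)·v_r^p) + k·exp(q·v), for all t ∈ ℝ and r > 0. -/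

import Mathlib

noncomputable section

/-- Partial derivative in the first (time) variable. -/
def partial_t (u : ℝ → ℝ → ℝ) (t r : ℝ) : ℝ := deriv (fun s => u s r) t

/-- Partial derivative in the second (space) variable. -/
def partial_r (u : ℝ → ℝ → ℝ) (t r : ℝ) : ℝ := deriv (fun s => u t s) r

/-- Second partial derivative in the second (space) variable. -/
def partial_rr (u : ℝ → ℝ → ℝ) (t r : ℝ) : ℝ := deriv (deriv (fun s => u t s)) r

/-- Mixed partial derivative: first in space, then in time. -/
def partial_tr (u : ℝ → ℝ → ℝ) (t r : ℝ) : ℝ := deriv (fun s => deriv (fun y => u s y) r) t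

/-- `u` is C² on ℝ × (0,∞): `u`, `u_t`, `u_r`, `u_rr` and the mixed partial `u_tr`
exist and are continuous there. -/
def IsC2On (u : ℝ → ℝ → ℝ) : Prop :=
  (∀ t r : ℝ, 0 < r → DifferentiableAt ℝ (fun s => u s r) t) ∧
  (∀ t r : ℝ, 0 < r → DifferentiableAt ℝ (fun s => u t s) r) ∧
  (∀ t r : ℝ, 0 < r → DifferentiableAt ℝ (deriv (fun s => u t s)) r) ∧
  (∀ t r : ℝ, 0 < r → DifferentiableAt ℝ (fun s => deriv (fun y => u s y) r) t) ∧
  ContinuousOn (fun q : ℝ × ℝ => u q.1 q.2) {q : ℝ × ℝ | 0 < q.2} ∧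
  ContinuousOn (fun q : ℝ × ℝ => partial_t u q.1 q.2) {q : ℝ × ℝ | 0 < q.2} ∧
  ContinuousOn (fun q : ℝ × ℝ => partial_r u q.1 q.2) {q : ℝ × ℝ | 0 < q.2} ∧
  ContinuousOn (fun q : ℝ × ℝ => partial_rr u q.1 q.2) {q : ℝ × ℝ | 0 < q.2} ∧
  ContinuousOn (fun q : ℝ × ℝ => partial_tr u q.1 q.2) {q : ℝ × ℝ | 0 < q.2}

lemma deriv_comp_mul_aux (f : ℝ → ℝ) (b x : ℝ) (hf : DifferentiableAt ℝ f (b * x)) :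
    deriv (fun s => f (b * s)) x = b * deriv f (b * x) := by
  have h1 : HasDerivAt (fun s : ℝ => b * s) b x := by
    simpa using (hasDerivAt_id x).const_mul b
  have h2 := hf.hasDerivAt.comp x h1
  have h3 := h2.deriv
  simp only [Function.comp_def] at h3
  exact h3.trans (mul_comm _ _)

/-- The scaling-and-shift point symmetry X₈ of the 1-dimensional nonlinear
diffusion-reaction equation with power-law diffusivity and exponential source. -/
theorem symmetry_X8 (κ k m ε p q : ℝ)
    (hp : p ≠ -1 ∧ p ≠ 0 ∧ p ≠ 1) (hq : q ≠ 0)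
    (u : ℝ → ℝ → ℝ) (hu : IsC2On u)
    (hur : ∀ t r : ℝ, 0 < r → 0 < partial_r u t r)
    (hpde : ∀ t r : ℝ, 0 < r →
      partial_t u t r
        = -κ * (p * partial_r u t r ^ (p - 1) * partial_rr u t r
            + (m / r) * partial_r u t r ^ p)
          + k * Real.exp (q * u t r))
    (v : ℝ → ℝ → ℝ)
    (hv : ∀ t r : ℝ,
      v t r = u (Real.exp (-(p + 1) * q * ε) * t) (Real.exp (-q * ε) * r) - (p + 1) * ε) :
    ∀ t r : ℝ, 0 < r →
      0 < partial_r v t r ∧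
      partial_t v t r
        = -κ * (p * partial_r v t r ^ (p - 1) * partial_rr v t r
            + (m / r) * partial_r v t r ^ p)
          + k * Real.exp (q * v t r) := by
  intro t r hr
  set a : ℝ := Real.exp (-(p + 1) * q * ε) with ha
  set b : ℝ := Real.exp (-q * ε) with hb
  have hb0 : 0 < b := Real.exp_pos _
  have ha0 : 0 < a := Real.exp_pos _
  have hbr : 0 < b * r := by positivity
  have hab : a = b ^ (p + 1) := by
    rw [hb, ← Real.exp_mul, ha]; ring_nf
  -- partial_r of v
  have hvr : ∀ s : ℝ, 0 < s → partial_r v t s = b * partial_r u (a * t) (b * s) := by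
    intro s hs
    have hdiff : DifferentiableAt ℝ (fun y => u (a * t) y) (b * s) :=
      hu.2.1 (a * t) (b * s) (by positivity)
    have : (fun y => v t y) = fun y => (fun z => u (a * t) z) (b * y) - (p + 1) * ε := by
      funext y; rw [hv]
    rw [partial_r, this, deriv_sub_const, deriv_comp_mul_aux _ _ _ hdiff, partial_r]
  have hvrpos : 0 < partial_r v t r := by
    rw [hvr r hr]; exact mul_pos hb0 (hur _ _ hbr)
  refine ⟨hvrpos, ?_⟩
  -- partial_rr of v
  have hvrr : partial_rr v t r = b * (b * partial_rr u (a * t) (b * r)) := by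
    have heq : deriv (fun y => v t y) =ᶠ[nhds r]
        (fun s => b * deriv (fun y => u (a * t) y) (b * s)) := by
      filter_upwards [eventually_gt_nhds hr] with s hs
      have := hvr s hs
      simpa [partial_r] using this
    rw [partial_rr, heq.deriv_eq, deriv_const_mul_field,
      deriv_comp_mul_aux _ _ _ (hu.2.2.1 (a * t) (b * r) hbr), partial_rr]
  -- partial_t of v
  have hvt : partial_t v t r = a * partial_t u (a * t) (b * r) := by
    have hdiff : DifferentiableAt ℝ (fun s => u s (b * r)) (a * t) :=
      hu.1 (a * t) (b * r) hbr
    have : (fun s => v s r) = fun s => (fun z => u z (b * r)) (a * s) - (p + 1) * ε := by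
      funext s; rw [hv]
    rw [partial_t, this, deriv_sub_const, deriv_comp_mul_aux _ _ _ hdiff, partial_t]
  have hvval : v t r = u (a * t) (b * r) - (p + 1) * ε := hv t r
  set X := partial_r u (a * t) (b * r) with hX
  set Y := partial_rr u (a * t) (b * r) with hY
  set U := u (a * t) (b * r) with hU
  have hXpos : 0 < X := hur _ _ hbr
  have hpde' := hpde (a * t) (b * r) hbr
  rw [hvt, hpde', hvr r hr, hvrr, hvval]
  -- rpow algebra
  have hmul1 : (b * X) ^ (p - 1) = b ^ (p - 1) * X ^ (p - 1) :=
    Real.mul_rpow hb0.le hXpos.le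
  have hmul2 : (b * X) ^ p = b ^ p * X ^ p := Real.mul_rpow hb0.le hXpos.le
  have hbp1 : b ^ (p + 1) = b ^ (p - 1) * b * b := by
    rw [show p + 1 = (p - 1) + 1 + 1 by ring, Real.rpow_add hb0, Real.rpow_add hb0,
      Real.rpow_one]
  have hbp : b ^ (p + 1) = b ^ p * b := by
    rw [Real.rpow_add hb0, Real.rpow_one]
  have hexp : Real.exp (q * (U - (p + 1) * ε)) = a * Real.exp (q * U) := by
    rw [ha, ← Real.exp_add]; ring_nf
  rw [hmul1, hmul2, hexp]
  have e1 : a * (p * X ^ (p - 1) * Y) = p * (b ^ (p - 1) * X ^ (p - 1)) * (b * (b * Y)) := by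
    rw [hab, hbp1]; ring
  have e2 : a * (m / (b * r) * X ^ p) = m / r * (b ^ p * X ^ p) := by
    rw [hab, hbp]; field_simp
  linear_combination (-κ) * e1 + (-κ) * e2
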